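/- Let G be a connected weighted graph with weights in (0,1) and let T be a maximum spanning tree of G. Let C* be an optimal k-clustering of G under the min-max quality measure Φ (evaluated in G), and let C† be an optimal k-clustering of T under the quality measure Φ_T restricted to edges of T. Then Φ(C*) = Φ_T(C†). That is, the optimal min-max clustering value of G equals that of its maximum spanning tree. -/

import Mathlib

open scoped Classical
noncomputable section

namespace Bal

variable {V : Type*}

/-- Total weight of the edges of a graph. -/
def totalWeight {α : Type*} [Fintype α] (H : SimpleGraph α) (w : Sym2 α → ℝ) : ℝ :=
  ∑ e : Sym2 α, if e ∈ H.edgeSet then w e else 0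

/-- `T` is a maximum spanning tree of `G` w.r.t. the weight `w`. -/
def IsMaxSpanTree {α : Type*} [Fintype α] (G T : SimpleGraph α) (w : Sym2 α → ℝ) : Prop :=
  T ≤ G ∧ T.IsTree ∧
    ∀ T' : SimpleGraph α, T' ≤ G → T'.IsTree → totalWeight T' w ≤ totalWeight T w

/-- Weight function on the induced subgraph on `C`. -/
def subWeight (w : Sym2 V → ℝ) (C : Set V) : Sym2 C → ℝ :=
  fun e => w (e.map Subtype.val)

/-- Edges of `G` with exactly one endpoint in `C`. -/
def outEdges (G : SimpleGraph V) (C : Set V) : Set (Sym2 V) :=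
  {e | e ∈ G.edgeSet ∧ ∃ a b, e = s(a, b) ∧ a ∈ C ∧ b ∉ C}

/-- Edges of `G` with both endpoints in `C`. -/
def inEdges (G : SimpleGraph V) (C : Set V) : Set (Sym2 V) :=
  {e | e ∈ G.edgeSet ∧ ∀ x ∈ e, x ∈ C}

/-- `max(Out(C))`, with the convention `sSup ∅ = 0`. -/
def maxOut (G : SimpleGraph V) (w : Sym2 V → ℝ) (C : Set V) : ℝ :=
  sSup (w '' outEdges G C)

/-- `min(E(C))`, with the convention that it is `1` for singletons. -/
def minIn (G : SimpleGraph V) (w : Sym2 V → ℝ) (C : Set V) : ℝ :=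
  if C.Subsingleton then 1 else sInf (w '' inEdges G C)

/-- `min(MST(C))` : minimum weight of an edge of a maximum spanning tree of `G[C]`,
with the convention that it is `1` for singletons. -/
def minMST [Fintype V] (G : SimpleGraph V) (w : Sym2 V → ℝ) (C : Set V) : ℝ :=
  if C.Subsingleton then 1
  else if h : ∃ T : SimpleGraph C, IsMaxSpanTree (G.induce C) T (subWeight w C) then
    sInf (subWeight w C '' h.choose.edgeSet)
  else 1

/-- Quality measure of a cluster in a graph: `max(Out(C)) / min(MST(C))`. -/
def phi [Fintype V] (G : SimpleGraph V) (w : Sym2 V → ℝ) (C : Set V) : ℝ :=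
  maxOut G w C / minMST G w C

/-- Quality measure of a cluster in a tree: `max(Out(C)) / min(E(C))`. -/
def phiT (G : SimpleGraph V) (w : Sym2 V → ℝ) (C : Set V) : ℝ :=
  maxOut G w C / minIn G w C

/-- `𝒞` is a partition of `U ⊆ V` into `G`-connected parts. -/
def IsPartitionOn (G : SimpleGraph V) (U : Set V) (𝒞 : Set (Set V)) : Prop :=
  (∀ C ∈ 𝒞, C.Nonempty ∧ C ⊆ U ∧ (G.induce C).Connected) ∧
  (∀ C ∈ 𝒞, ∀ C' ∈ 𝒞, C ≠ C' → Disjoint C C') ∧ ⋃₀ 𝒞 = U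

/-- A `k`-clustering of a graph `G` on vertex set `V`. -/
def IsClustering (G : SimpleGraph V) (𝒞 : Set (Set V)) (k : ℕ) : Prop :=
  IsPartitionOn G Set.univ 𝒞 ∧ 𝒞.ncard = k

/-- Evaluation of a clustering of a graph (min-max quality measure, MST-based). -/
def eval [Fintype V] (G : SimpleGraph V) (w : Sym2 V → ℝ) (𝒞 : Set (Set V)) : ℝ :=
  sSup (phi G w '' 𝒞)

/-- Evaluation of a clustering of a tree. -/
def evalT (G : SimpleGraph V) (w : Sym2 V → ℝ) (𝒞 : Set (Set V)) : ℝ :=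
  sSup (phiT G w '' 𝒞)

/-- `𝒞` is an optimal `k`-clustering of `G`. -/
def IsOptimal [Fintype V] (G : SimpleGraph V) (w : Sym2 V → ℝ) (k : ℕ) (𝒞 : Set (Set V)) : Prop :=
  IsClustering G 𝒞 k ∧ ∀ 𝒟, IsClustering G 𝒟 k → eval G w 𝒞 ≤ eval G w 𝒟

/-- All edge weights lie in the open interval `(0,1)`. -/
def weightsOK (G : SimpleGraph V) (w : Sym2 V → ℝ) : Prop :=
  ∀ e ∈ G.edgeSet, 0 < w e ∧ w e < 1

/-- The set of connected components (as vertex sets) of a graph. -/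
def components (G : SimpleGraph V) : Set (Set V) :=
  {C | ∃ x : V, C = {y | G.Reachable x y}}

open SimpleGraph

/-! ### Real sup/inf helpers -/

lemma finite_im {α : Type*} [Finite α] (w : α → ℝ) (s : Set α) : (w '' s).Finite :=
  (Set.toFinite s).image w

lemma le_sSup_fin {s : Set ℝ} (hfin : s.Finite) {a : ℝ} (ha : a ∈ s) : a ≤ sSup s :=
  le_csSup hfin.bddAbove ha

lemma sInf_le_fin {s : Set ℝ} (hfin : s.Finite) {a : ℝ} (ha : a ∈ s) : sInf s ≤ a :=
  csInf_le hfin.bddBelow ha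

lemma sSup_mem_fin {s : Set ℝ} (hfin : s.Finite) (hne : s.Nonempty) : sSup s ∈ s :=
  hne.csSup_mem hfin

lemma sInf_mem_fin {s : Set ℝ} (hfin : s.Finite) (hne : s.Nonempty) : sInf s ∈ s :=
  hne.csInf_mem hfin

lemma sSup_nonneg_fin {s : Set ℝ} (h : ∀ x ∈ s, 0 ≤ x) : 0 ≤ sSup s := by
  rcases s.eq_empty_or_nonempty with rfl | hne
  · simp [Real.sSup_empty]
  · rcases hne with ⟨x, hx⟩
    by_cases hb : BddAbove s
    · exact le_trans (h x hx) (le_csSup hb hx)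
    · simp [Real.sSup_of_not_bddAbove hb]

/-! ### Walk helpers -/

/-- A walk avoiding the edge `s(a,b)` stays in reachability class, plus side info. -/
lemma walk_side {H : SimpleGraph V} {a b : V} :
    ∀ {x y : V}, H.Reachable x y →
      (H.deleteEdges {s(a,b)}).Reachable x y ∨
      ((H.deleteEdges {s(a,b)}).Reachable x a ∧ (H.deleteEdges {s(a,b)}).Reachable b y) ∨
      ((H.deleteEdges {s(a,b)}).Reachable x b ∧ (H.deleteEdges {s(a,b)}).Reachable a y) := by
  intro x y hxy
  obtain ⟨p⟩ := hxy
  induction p with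
  | nil => exact Or.inl (Reachable.refl _)
  | @cons u z y huz q ih =>
    by_cases he : s(u, z) = s(a, b)
    · rw [Sym2.eq_iff] at he
      rcases he with ⟨rfl, rfl⟩ | ⟨rfl, rfl⟩
      · -- u = a, z = b
        rcases ih with h | ⟨h1, h2⟩ | ⟨h1, h2⟩
        · exact Or.inr (Or.inl ⟨Reachable.refl _, h⟩)
        · exact Or.inr (Or.inl ⟨Reachable.refl _, h2⟩)
        · exact Or.inl h2
      · -- u = b, z = a
        rcases ih with h | ⟨h1, h2⟩ | ⟨h1, h2⟩
        · exact Or.inr (Or.inr ⟨Reachable.refl _, h⟩)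
        · exact Or.inl h2
        · exact Or.inr (Or.inr ⟨Reachable.refl _, h2⟩)
    · have hadj : (H.deleteEdges {s(a,b)}).Adj u z := by
        rw [deleteEdges_adj]
        exact ⟨huz, by simpa using he⟩
      rcases ih with h | ⟨h1, h2⟩ | ⟨h1, h2⟩
      · exact Or.inl (hadj.reachable.trans h)
      · exact Or.inr (Or.inl ⟨hadj.reachable.trans h1, h2⟩)
      · exact Or.inr (Or.inr ⟨hadj.reachable.trans h1, h2⟩)

/-- In a graph where `a, b` are still reachable after deleting `s(a,b)`, deletion
preserves reachability. -/
lemma reach_delete_of_reach {H : SimpleGraph V} {a b x y : V}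
    (hab : (H.deleteEdges {s(a,b)}).Reachable a b) (hxy : H.Reachable x y) :
    (H.deleteEdges {s(a,b)}).Reachable x y := by
  rcases walk_side hxy with h | ⟨h1, h2⟩ | ⟨h1, h2⟩
  · exact h
  · exact (h1.trans hab).trans h2
  · exact (h1.trans hab.symm).trans h2

/-- Side dichotomy: any vertex reachable from `a` in `H` is reachable from `a` or from `b`
after deleting the edge `s(a,b)`. -/
lemma side_total {H : SimpleGraph V} {a b x : V} (h : H.Reachable a x) :
    (H.deleteEdges {s(a,b)}).Reachable a x ∨ (H.deleteEdges {s(a,b)}).Reachable b x := by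
  rcases walk_side (a := a) (b := b) h with h | ⟨h1, h2⟩ | ⟨h1, h2⟩
  · exact Or.inl h
  · exact Or.inr h2
  · exact Or.inl h2

/-- In an acyclic graph, any edge is a bridge. -/
lemma acyclic_bridge {H : SimpleGraph V} (hac : H.IsAcyclic) {a b : V} (hab : H.Adj a b) :
    ¬ (H.deleteEdges {s(a,b)}).Reachable a b := by
  have := (isAcyclic_iff_forall_adj_isBridge.mp hac) hab
  rw [isBridge_iff] at this
  exact this

lemma isAcyclic_mono {H H' : SimpleGraph V} (hle : H ≤ H') (hac : H'.IsAcyclic) :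
    H.IsAcyclic := by
  intro v p hp
  exact hac (p.mapLe hle) ((Walk.mapLe_isCycle hle).mpr hp)


/-! ### Boundary crossing -/

lemma boundary {H : SimpleGraph V} {u v : V} (p : H.Walk u v) (P : Set V)
    (hu : u ∈ P) (hv : v ∉ P) :
    ∃ x y, H.Adj x y ∧ x ∈ P ∧ y ∉ P ∧ s(x,y) ∈ p.edges ∧ x ∈ p.support ∧ y ∈ p.support := by
  obtain ⟨d, hd, h1, h2⟩ := p.exists_boundary_dart P hu hv
  refine ⟨d.fst, d.snd, d.adj, h1, h2, ?_, ?_, ?_⟩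
  · exact List.mem_map_of_mem (f := Dart.edge) hd
  · exact Walk.dart_fst_mem_support_of_mem_darts _ hd
  · exact Walk.dart_snd_mem_support_of_mem_darts _ hd

/-- Deleting an edge of a path in an acyclic graph disconnects its ends. -/
lemma path_delete {H : SimpleGraph V} (hac : H.IsAcyclic) {c d : V} (p : H.Walk c d)
    (hp : p.IsPath) {f : Sym2 V} (hf : f ∈ p.edges) :
    ¬ (H.deleteEdges {f}).Reachable c d := by
  intro hreach
  refine hreach.elim_path fun q => ?_
  have hle : H.deleteEdges {f} ≤ H := deleteEdges_le _
  have hq' : (q.val.mapLe hle).IsPath := (Walk.mapLe_isPath hle).mpr q.property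
  have := hac.path_unique ⟨p, hp⟩ ⟨q.val.mapLe hle, hq'⟩
  have hfq : f ∈ (q.val.mapLe hle).edges := by
    have : p = q.val.mapLe hle := congrArg Subtype.val this
    rwa [this] at hf
  have hfq2 : f ∈ q.val.edges := by
    simpa [Walk.mapLe, Walk.edges_map, Walk.edges_mapLe_eq_edges, Sym2.map_id', id]
      using hfq
  have := q.val.edges_subset_edgeSet hfq2
  rw [edgeSet_deleteEdges] at this
  exact this.2 rfl

/-- Every connected graph on a finite vertex type has a spanning tree. -/
lemma exists_spanning_tree [Fintype V] (H : SimpleGraph V) (hH : H.Connected) :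
    ∃ T₀ : SimpleGraph V, T₀ ≤ H ∧ T₀.IsTree := by
  classical
  obtain ⟨n, hn⟩ : ∃ n, H.edgeSet.ncard ≤ n := ⟨H.edgeSet.ncard, le_rfl⟩
  induction n generalizing H with
  | zero =>
    refine ⟨H, le_rfl, hH, ?_⟩
    have h0 : H.edgeSet = ∅ := by
      rw [← Set.ncard_eq_zero (Set.toFinite H.edgeSet)]
      omega
    rw [edgeSet_eq_empty] at h0
    rw [h0]
    exact isAcyclic_bot
  | succ n ih =>
    by_cases hac : H.IsAcyclic
    · exact ⟨H, le_rfl, hH, hac⟩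
    · rw [isAcyclic_iff_forall_adj_isBridge] at hac
      push_neg at hac
      obtain ⟨a, b, hab, hbr⟩ := hac
      rw [isBridge_iff] at hbr
      push_neg at hbr
      have hreach : (H.deleteEdges {s(a,b)}).Reachable a b := hbr
      have hconn' : (H.deleteEdges {s(a,b)}).Connected := by
        rw [connected_iff] at hH ⊢
        exact ⟨fun x y => reach_delete_of_reach hreach (hH.1 x y), hH.2⟩
      obtain ⟨T₀, hle, htree⟩ := ih _ hconn' (by
        rw [edgeSet_deleteEdges]
        have hmem : s(a,b) ∈ H.edgeSet := hab
        have := Set.ncard_diff_singleton_lt_of_mem hmem (Set.toFinite _)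
        omega)
      exact ⟨T₀, hle.trans (deleteEdges_le _), htree⟩

lemma tree_ncard [Fintype V] {H : SimpleGraph V} (h : H.IsTree) :
    H.edgeSet.ncard + 1 = Fintype.card V := by
  classical
  rw [Set.ncard_eq_toFinset_card']
  exact h.card_edgeFinset

/-- A connected graph with `|V| - 1` edges is a tree. -/
lemma isTree_of_connected_card [Fintype V] {H : SimpleGraph V} (hH : H.Connected)
    (hcard : H.edgeSet.ncard + 1 = Fintype.card V) : H.IsTree := by
  classical
  refine ⟨hH, ?_⟩
  by_contra hac
  rw [isAcyclic_iff_forall_adj_isBridge] at hac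
  push_neg at hac
  obtain ⟨a, b, hab, hbr⟩ := hac
  rw [isBridge_iff] at hbr
  push_neg at hbr
  have hreach : (H.deleteEdges {s(a,b)}).Reachable a b := hbr
  have hconn' : (H.deleteEdges {s(a,b)}).Connected := by
    rw [connected_iff] at hH ⊢
    exact ⟨fun x y => reach_delete_of_reach hreach (hH.1 x y), hH.2⟩
  obtain ⟨T₀, hle, htree⟩ := exists_spanning_tree _ hconn'
  have h1 : T₀.edgeSet ⊆ H.edgeSet \ {s(a,b)} := by
    rw [← edgeSet_deleteEdges]
    exact edgeSet_mono hle
  have h2 : (H.edgeSet \ {s(a,b)}).ncard < H.edgeSet.ncard :=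
    Set.ncard_diff_singleton_lt_of_mem hab (Set.toFinite _)
  have h3 := Set.ncard_le_ncard h1 (Set.toFinite _)
  have h4 := tree_ncard htree
  omega

/-! ### The swap lemma -/

lemma swap_tree {α : Type*} [Fintype α] {T₀ : SimpleGraph α} (hT₀ : T₀.IsTree) {a b c d : α}
    (hf : s(a,b) ∈ T₀.edgeSet)
    (hc : (T₀.deleteEdges {s(a,b)}).Reachable a c)
    (hd : ¬ (T₀.deleteEdges {s(a,b)}).Reachable a d) :
    (SimpleGraph.fromEdgeSet ((T₀.edgeSet \ {s(a,b)}) ∪ {s(c,d)})).IsTree ∧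
    (SimpleGraph.fromEdgeSet ((T₀.edgeSet \ {s(a,b)}) ∪ {s(c,d)})).edgeSet
      = (T₀.edgeSet \ {s(a,b)}) ∪ {s(c,d)} := by
  classical
  set Td := T₀.deleteEdges {s(a,b)} with hTd
  have hcd_ne : c ≠ d := by rintro rfl; exact hd hc
  have hadj_ab : T₀.Adj a b := T₀.mem_edgeSet.mp hf
  set E' : Set (Sym2 α) := (T₀.edgeSet \ {s(a,b)}) ∪ {s(c,d)} with hE'
  have hES : (SimpleGraph.fromEdgeSet E').edgeSet = E' := by
    rw [edgeSet_fromEdgeSet]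
    rw [sdiff_eq_left, Set.disjoint_right]
    intro e hdiag hmem
    rw [Sym2.mem_diagSet] at hdiag
    simp only [hE', Set.mem_union, Set.mem_diff, Set.mem_singleton_iff] at hmem
    rcases hmem with ⟨he, -⟩ | rfl
    · exact (T₀.not_isDiag_of_mem_edgeSet he) hdiag
    · rw [Sym2.isDiag_iff_proj_eq] at hdiag
      exact hcd_ne hdiag
  have hTdle : Td ≤ SimpleGraph.fromEdgeSet E' := by
    intro u v huv
    rw [← SimpleGraph.mem_edgeSet, hES]
    rw [hTd, deleteEdges_adj] at huv
    exact Or.inl ⟨huv.1, by simpa using huv.2⟩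
  have hadj_cd : (SimpleGraph.fromEdgeSet E').Adj c d := by
    rw [← SimpleGraph.mem_edgeSet, hES]
    exact Or.inr rfl
  have hbd : Td.Reachable b d := by
    rcases side_total (a := a) (b := b) (hT₀.1.preconnected a d) with h | h
    · exact absurd h hd
    · exact h
  have hconn : (SimpleGraph.fromEdgeSet E').Connected := by
    rw [connected_iff]
    refine ⟨fun x y => ?_, hT₀.1.nonempty⟩
    have key : ∀ z : α, (SimpleGraph.fromEdgeSet E').Reachable a z := by
      intro z
      rcases side_total (a := a) (b := b) (hT₀.1.preconnected a z) with h | h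
      · exact h.mono hTdle
      · exact ((hc.mono hTdle).trans hadj_cd.reachable).trans
          ((hbd.mono hTdle).symm.trans (h.mono hTdle))
    exact (key x).symm.trans (key y)
  have hcd_notin : s(c,d) ∉ T₀.edgeSet \ {s(a,b)} := by
    rintro ⟨hmem, hne⟩
    have : Td.Adj c d := by
      rw [hTd, deleteEdges_adj]
      exact ⟨T₀.mem_edgeSet.mp hmem, by simpa using hne⟩
    exact hd (hc.trans this.reachable)
  have hcard : E'.ncard = T₀.edgeSet.ncard := by
    rw [hE', Set.union_singleton,
      Set.ncard_insert_of_notMem hcd_notin (Set.toFinite _)]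
    have h1 : (T₀.edgeSet \ {s(a,b)}).ncard = T₀.edgeSet.ncard - 1 :=
      Set.ncard_diff_singleton_of_mem hf
    have h2 : 0 < T₀.edgeSet.ncard :=
      (Set.ncard_pos (Set.toFinite _)).mpr ⟨_, hf⟩
    omega
  refine ⟨isTree_of_connected_card hconn ?_, hES⟩
  rw [hES, hcard]
  exact tree_ncard hT₀

/-! ### Total weight of a swap -/

lemma totalWeight_swap {α : Type*} [Fintype α] (w : Sym2 α → ℝ) {G₁ G₂ : SimpleGraph α}
    {f h : Sym2 α} (hne : f ≠ h) (hE : G₂.edgeSet = (G₁.edgeSet \ {f}) ∪ {h})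
    (hf : f ∈ G₁.edgeSet) (hh : h ∉ G₁.edgeSet) :
    totalWeight G₂ w = totalWeight G₁ w - w f + w h := by
  classical
  unfold totalWeight
  have key : ∀ e : Sym2 α, (if e ∈ G₂.edgeSet then w e else 0)
      = (if e ∈ G₁.edgeSet then w e else 0)
        - (if e = f then w e else 0) + (if e = h then w e else 0) := by
    intro e
    by_cases hef : e = f
    · subst hef
      have : e ∉ G₂.edgeSet := by
        rw [hE]
        rintro (⟨-, hmem⟩ | hmem)
        · exact hmem rfl
        · exact hne hmem
      simp [this, hf, hne]
    · by_cases heh : e = h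
      · subst heh
        have : e ∈ G₂.edgeSet := by rw [hE]; exact Or.inr rfl
        simp [this, hh, hef]
      · have : e ∈ G₂.edgeSet ↔ e ∈ G₁.edgeSet := by
          rw [hE]
          constructor
          · rintro (⟨hmem, -⟩ | hmem)
            · exact hmem
            · exact absurd hmem heh
          · intro hmem
            exact Or.inl ⟨hmem, hef⟩
        simp only [hef, heh, if_false]
        rw [if_congr this rfl rfl]
        ring
  rw [Finset.sum_congr rfl (fun e _ => key e)]
  rw [Finset.sum_add_distrib, Finset.sum_sub_distrib]
  congr 1
  · congr 1
    simp
  · simp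

/-! ### The cut property of maximum spanning trees -/

lemma cut_property_aux [Fintype V] {G T : SimpleGraph V} {w : Sym2 V → ℝ}
    (hT : IsMaxSpanTree G T w) {x y c d : V} (hf : s(x,y) ∈ T.edgeSet)
    (hcd : s(c,d) ∈ G.edgeSet) (hne : s(c,d) ≠ s(x,y))
    (hc : (T.deleteEdges {s(x,y)}).Reachable x c)
    (hd : ¬ (T.deleteEdges {s(x,y)}).Reachable x d) :
    w s(c,d) ≤ w s(x,y) := by
  have hcd_notinT : s(c,d) ∉ T.edgeSet := by
    intro hmem
    have : (T.deleteEdges {s(x,y)}).Adj c d := by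
      rw [deleteEdges_adj]
      exact ⟨T.mem_edgeSet.mp hmem, by simpa using hne⟩
    exact hd (hc.trans this.reachable)
  obtain ⟨htree, hES⟩ := swap_tree hT.2.1 hf hc hd
  have hle : SimpleGraph.fromEdgeSet ((T.edgeSet \ {s(x,y)}) ∪ {s(c,d)}) ≤ G := by
    intro u v huv
    rw [← SimpleGraph.mem_edgeSet, hES] at huv
    rcases huv with ⟨hmem, -⟩ | hmem
    · exact hT.1 (T.mem_edgeSet.mp hmem)
    · rw [Set.mem_singleton_iff] at hmem
      rw [← SimpleGraph.mem_edgeSet, hmem]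
      exact hcd
  have hmax := hT.2.2 _ hle htree
  have htw := totalWeight_swap w (Ne.symm hne) hES hf hcd_notinT
  rw [htw] at hmax
  linarith

lemma cut_property [Fintype V] {G T : SimpleGraph V} {w : Sym2 V → ℝ}
    (hT : IsMaxSpanTree G T w) {x y c d : V} (hf : s(x,y) ∈ T.edgeSet)
    (hcd : s(c,d) ∈ G.edgeSet)
    (hncd : ¬ (T.deleteEdges {s(x,y)}).Reachable c d) :
    w s(c,d) ≤ w s(x,y) := by
  by_cases hne : s(c,d) = s(x,y)
  · rw [hne]
  have hbridge : ¬ (T.deleteEdges {s(x,y)}).Reachable x y :=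
    acyclic_bridge hT.2.1.2 (T.mem_edgeSet.mp hf)
  have h1 := side_total (a := x) (b := y) (hT.2.1.1.preconnected x c)
  have h2 := side_total (a := x) (b := y) (hT.2.1.1.preconnected x d)
  rcases h1 with h1 | h1 <;> rcases h2 with h2 | h2
  · exact absurd (h1.symm.trans h2) hncd
  · exact cut_property_aux hT hf hcd hne h1
      (fun hx => hbridge (hx.trans h2.symm))
  · have : w s(d,c) ≤ w s(x,y) := by
      apply cut_property_aux hT hf (by rwa [Sym2.eq_swap]) (by rwa [Sym2.eq_swap]) h2
      intro hx
      exact hbridge (hx.trans h1.symm)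
    rwa [Sym2.eq_swap]
  · exact absurd (h1.symm.trans h2) hncd

/-! ### maxOut facts -/

lemma mem_outEdges {G : SimpleGraph V} {C : Set V} {a b : V} (he : s(a,b) ∈ G.edgeSet)
    (ha : a ∈ C) (hb : b ∉ C) : s(a,b) ∈ outEdges G C :=
  ⟨he, a, b, rfl, ha, hb⟩

lemma le_maxOut [Fintype V] {G : SimpleGraph V} {w : Sym2 V → ℝ} {C : Set V} {e : Sym2 V}
    (he : e ∈ outEdges G C) : w e ≤ maxOut G w C :=
  le_sSup_fin (finite_im w _) (Set.mem_image_of_mem w he)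

lemma maxOut_nonneg [Fintype V] {G : SimpleGraph V} {w : Sym2 V → ℝ}
    (hw : weightsOK G w) (C : Set V) : 0 ≤ maxOut G w C := by
  apply sSup_nonneg_fin
  rintro x ⟨e, ⟨heG, -⟩, rfl⟩
  exact (hw e heG).1.le

/-- The cut property for arbitrary vertex sets : the maximum outgoing edge weight
of a set is the same in `G` and in a maximum spanning tree `T`. -/
lemma maxOut_eq [Fintype V] {G T : SimpleGraph V} {w : Sym2 V → ℝ}
    (hT : IsMaxSpanTree G T w) (hw : weightsOK G w) (P : Set V) :
    maxOut T w P = maxOut G w P := by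
  apply le_antisymm
  · apply Real.sSup_le _ (maxOut_nonneg hw P)
    rintro r ⟨e, ⟨heT, a, b, rfl, ha, hb⟩, rfl⟩
    exact le_maxOut (mem_outEdges (edgeSet_mono hT.1 heT) ha hb)
  · apply Real.sSup_le
    · rintro r ⟨e, ⟨heG, a, b, rfl, haP, hbP⟩, rfl⟩
      have hreach : T.Reachable a b := hT.2.1.1.preconnected a b
      refine hreach.elim_path fun p => ?_
      obtain ⟨x, y, hadj, hxP, hyP, hedge, -, -⟩ := boundary p.val P haP hbP
      have hfT : s(x,y) ∈ T.edgeSet := hadj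
      have hnr := path_delete hT.2.1.2 p.val p.property hedge
      calc w s(a,b) ≤ w s(x,y) := cut_property hT hfT heG hnr
        _ ≤ maxOut T w P := le_maxOut (mem_outEdges hfT hxP hyP)
    · apply sSup_nonneg_fin
      rintro x ⟨e, ⟨heT, -⟩, rfl⟩
      exact (hw e (edgeSet_mono hT.1 heT)).1.le

/-! ### Components machinery -/

lemma cl_mem_components {H : SimpleGraph V} (x : V) :
    {y | H.Reachable x y} ∈ components H := ⟨x, rfl⟩

lemma cl_eq_of_reach {H : SimpleGraph V} {x y : V} (h : H.Reachable x y) :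
    {z | H.Reachable y z} = {z | H.Reachable x z} := by
  ext z
  exact ⟨fun hz => h.trans hz, fun hz => h.symm.trans hz⟩

lemma support_reach {H : SimpleGraph V} {x v : V} (p : H.Walk x v) {z : V}
    (hz : z ∈ p.support) : H.Reachable x z :=
  (p.takeUntil z hz).reachable

lemma class_induce_connected {H : SimpleGraph V} (x : V) :
    (H.induce {y | H.Reachable x y}).Connected := by
  apply SimpleGraph.induce_connected_of_patches x (by exact Reachable.refl x)
  intro v hv
  refine (hv : H.Reachable x v).elim fun p => ?_
  refine ⟨{z | z ∈ p.support}, fun z hz => support_reach p hz,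
    p.start_mem_support, p.end_mem_support, ?_⟩
  exact (p.connected_induce_support).preconnected _ _

lemma components_partition {H : SimpleGraph V} :
    IsPartitionOn H Set.univ (components H) := by
  refine ⟨?_, ?_, ?_⟩
  · rintro C ⟨x, rfl⟩
    exact ⟨⟨x, Reachable.refl x⟩, Set.subset_univ _, class_induce_connected x⟩
  · rintro C ⟨x, rfl⟩ C' ⟨x', rfl⟩ hne
    rw [Set.disjoint_left]
    intro z hz hz'
    exact hne ((cl_eq_of_reach hz).symm.trans (cl_eq_of_reach hz'))
  · ext z
    simp only [Set.mem_sUnion, Set.mem_univ, iff_true]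
    exact ⟨_, cl_mem_components z, Reachable.refl z⟩

lemma components_bot_ncard [Fintype V] :
    (components (⊥ : SimpleGraph V)).ncard = Fintype.card V := by
  have h1 : components (⊥ : SimpleGraph V) = Set.range (fun x : V => ({x} : Set V)) := by
    ext C
    constructor
    · rintro ⟨x, rfl⟩
      refine ⟨x, ?_⟩
      ext y
      simp [reachable_bot, eq_comm]
    · rintro ⟨x, rfl⟩
      refine ⟨x, ?_⟩
      ext y
      simp [reachable_bot, eq_comm]
  rw [h1, ← Set.image_univ, Set.ncard_image_of_injective _ (fun x y h => by
    simpa [Set.singleton_eq_singleton_iff] using h), Set.ncard_univ, Nat.card_eq_fintype_card]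

lemma components_delete_bridge [Fintype V] {H : SimpleGraph V} {a b : V} (hab : H.Adj a b)
    (hbr : ¬ (H.deleteEdges {s(a,b)}).Reachable a b) :
    (components (H.deleteEdges {s(a,b)})).ncard = (components H).ncard + 1 := by
  classical
  set Hd := H.deleteEdges {s(a,b)} with hHd
  have hmono : ∀ {x y : V}, Hd.Reachable x y → H.Reachable x y :=
    fun h => h.mono (deleteEdges_le _)
  have c1 : ∀ x, ¬ H.Reachable x a → ∀ y, (H.Reachable x y ↔ Hd.Reachable x y) := by
    intro x hxa y
    constructor
    · intro hxy
      rcases walk_side (a := a) (b := b) hxy with h | ⟨h1, h2⟩ | ⟨h1, h2⟩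
      · exact h
      · exact absurd (hmono h1) hxa
      · exact absurd ((hmono h1).trans hab.symm.reachable) hxa
    · exact hmono
  have heq_cl : ∀ x, ¬ H.Reachable x a →
      {z | H.Reachable x z} = {z | Hd.Reachable x z} := by
    intro x hxa
    ext z
    exact c1 x hxa z
  have hkey : components Hd =
      insert {z | Hd.Reachable a z} (insert {z | Hd.Reachable b z}
        (components H \ {{z | H.Reachable a z}})) := by
    ext C
    constructor
    · rintro ⟨x, rfl⟩
      by_cases hxa : H.Reachable x a
      · rcases side_total (a := a) (b := b) hxa.symm with h | h
        · exact Or.inl (cl_eq_of_reach h)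
        · exact Or.inr (Or.inl (cl_eq_of_reach h))
      · refine Or.inr (Or.inr ⟨⟨x, (heq_cl x hxa).symm⟩, ?_⟩)
        rw [Set.mem_singleton_iff]
        intro hC
        apply hxa
        have : a ∈ {z | Hd.Reachable x z} := by
          rw [show {z | Hd.Reachable x z} = {z | H.Reachable a z} from hC]
          exact Reachable.refl a
        exact hmono this
    · rintro (rfl | rfl | ⟨⟨x, rfl⟩, hne⟩)
      · exact ⟨a, rfl⟩
      · exact ⟨b, rfl⟩
      · rw [Set.mem_singleton_iff] at hne
        have hxa : ¬ H.Reachable x a := by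
          intro hxa
          exact hne (cl_eq_of_reach hxa.symm)
        exact ⟨x, heq_cl x hxa⟩
  have hab_ne : ({z | Hd.Reachable a z} : Set V) ≠ {z | Hd.Reachable b z} := by
    intro h
    apply hbr
    have : b ∈ {z | Hd.Reachable b z} := Reachable.refl b
    rw [← h] at this
    exact this
  have hnotinH : ∀ c : V, H.Reachable c a →
      {z | Hd.Reachable c z} ∉ components H \ {{z | H.Reachable a z}} := by
    rintro c hca ⟨⟨x, hx⟩, hne⟩
    rw [Set.mem_singleton_iff] at hne
    have hxc : H.Reachable x c := by
      have hc : c ∈ {z | Hd.Reachable c z} := Reachable.refl c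
      rw [hx] at hc
      exact hc
    exact hne (hx.trans (cl_eq_of_reach (hxc.trans hca)).symm)
  have hmem_a : {z | H.Reachable a z} ∈ components H := ⟨a, rfl⟩
  have hfin : (components H).Finite := Set.toFinite _
  rw [hkey]
  rw [Set.ncard_insert_of_notMem, Set.ncard_insert_of_notMem,
    Set.ncard_diff_singleton_of_mem hmem_a]
  · have : 1 ≤ (components H).ncard := by
      rw [Nat.one_le_iff_ne_zero]
      intro h0
      rw [Set.ncard_eq_zero hfin] at h0
      rw [h0] at hmem_a
      exact hmem_a
    omega
  · exact hnotinH b hab.symm.reachable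
  · rw [Set.mem_insert_iff]
    rintro (h | h)
    · exact hab_ne h
    · exact hnotinH a (Reachable.refl a) h
  
lemma forest_components [Fintype V] :
    ∀ (n : ℕ) (H : SimpleGraph V), H.IsAcyclic → H.edgeSet.ncard = n →
      (components H).ncard + n = Fintype.card V := by
  intro n
  induction n with
  | zero =>
    intro H _ h0
    rw [Set.ncard_eq_zero (Set.toFinite _)] at h0
    rw [edgeSet_eq_empty] at h0
    rw [h0, components_bot_ncard]
    omega
  | succ n ih =>
    intro H hac hcard
    obtain ⟨a, b, he⟩ : ∃ a b, s(a,b) ∈ H.edgeSet := by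
      have : H.edgeSet.Nonempty := by
        rw [← Set.ncard_pos (Set.toFinite _)]
        omega
      obtain ⟨e, he⟩ := this
      induction e using Sym2.ind with
      | _ a b => exact ⟨a, b, he⟩
    have hadj : H.Adj a b := H.mem_edgeSet.mp he
    have hbr := acyclic_bridge hac hadj
    have h1 := components_delete_bridge hadj hbr
    have h2 : (H.deleteEdges {s(a,b)}).edgeSet.ncard = n := by
      rw [edgeSet_deleteEdges]
      have := Set.ncard_diff_singleton_of_mem he
      omega
    have h3 := ih _ (isAcyclic_mono (deleteEdges_le _) hac) h2
    omega

lemma components_deleteEdges_ncard [Fintype V] {T : SimpleGraph V} (hT : T.IsTree)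
    {S : Set (Sym2 V)} (hS : S ⊆ T.edgeSet) :
    (components (T.deleteEdges S)).ncard = S.ncard + 1 := by
  have h1 := forest_components ((T.deleteEdges S).edgeSet.ncard) _
    (isAcyclic_mono (deleteEdges_le _) hT.2) rfl
  rw [edgeSet_deleteEdges] at h1
  have h2 : (T.edgeSet \ S).ncard + S.ncard = T.edgeSet.ncard :=
    Set.ncard_diff_add_ncard_of_subset hS (Set.toFinite _)
  have h3 := tree_ncard hT
  omega

/-! ### Existence of maximum spanning trees -/

lemma exists_maxSpanTree {α : Type*} [Fintype α] (H : SimpleGraph α) (hH : H.Connected)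
    (w' : Sym2 α → ℝ) : ∃ T₀, IsMaxSpanTree H T₀ w' := by
  classical
  have hfin : {T' : SimpleGraph α | T' ≤ H ∧ T'.IsTree}.Finite := Set.toFinite _
  have hne : {T' : SimpleGraph α | T' ≤ H ∧ T'.IsTree}.Nonempty := by
    obtain ⟨T₀, h1, h2⟩ := exists_spanning_tree H hH
    exact ⟨T₀, h1, h2⟩
  obtain ⟨T₀, hT₀, hmax⟩ := Set.exists_max_image _ (fun T' => totalWeight T' w') hfin hne
  exact ⟨T₀, hT₀.1, hT₀.2, fun T' h1 h2 => hmax T' ⟨h1, h2⟩⟩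

lemma induce_le_induce {G T : SimpleGraph V} (h : T ≤ G) (C : Set V) :
    T.induce C ≤ G.induce C := by
  intro u v huv
  simp only [comap_adj, Function.Embedding.coe_subtype] at huv ⊢
  exact h huv

lemma exists_maxSpanTree_induce [Fintype V] {G : SimpleGraph V} {C : Set V}
    (hC : (G.induce C).Connected) (w : Sym2 V → ℝ) :
    ∃ TC, IsMaxSpanTree (G.induce C) TC (subWeight w C) := by
  classical
  exact exists_maxSpanTree _ hC _

/-! ### Generic facts about induced edges -/

lemma induce_edge_mem {G : SimpleGraph V} {C : Set V} {e : Sym2 ↥C}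
    (h : e ∈ (G.induce C).edgeSet) :
    e.map Subtype.val ∈ G.edgeSet ∧ ∀ x ∈ e.map Subtype.val, x ∈ C := by
  induction e using Sym2.ind with
  | _ u v =>
    rw [SimpleGraph.mem_edgeSet, comap_adj] at h
    constructor
    · rw [Sym2.map_pair_eq, SimpleGraph.mem_edgeSet]
      exact h
    · intro x hx
      rw [Sym2.map_pair_eq, Sym2.mem_iff] at hx
      rcases hx with rfl | rfl
      · exact u.2
      · exact v.2

lemma connected_nontrivial_edge {α : Type*} {H : SimpleGraph α} (hH : H.Connected)
    (hnt : Nontrivial α) : H.edgeSet.Nonempty := by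
  by_contra hempty
  rw [Set.not_nonempty_iff_eq_empty, edgeSet_eq_empty] at hempty
  obtain ⟨x, y, hxy⟩ := hnt
  have := hH.preconnected x y
  rw [hempty, reachable_bot] at this
  exact hxy this

/-! ### minMST facts -/

lemma minMST_eq [Fintype V] {G : SimpleGraph V} {w : Sym2 V → ℝ} {C : Set V}
    (hsub : ¬C.Subsingleton)
    (hex : ∃ TC : SimpleGraph C, IsMaxSpanTree (G.induce C) TC (subWeight w C)) :
    minMST G w C = sInf (subWeight w C '' hex.choose.edgeSet) := by
  rw [minMST, if_neg hsub, dif_pos hex]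

lemma minMST_im_nonempty [Fintype V] {G : SimpleGraph V} {w : Sym2 V → ℝ} {C : Set V}
    (hsub : ¬C.Subsingleton)
    (hex : ∃ TC : SimpleGraph C, IsMaxSpanTree (G.induce C) TC (subWeight w C)) :
    (subWeight w C '' hex.choose.edgeSet).Nonempty := by
  have hnt : Nontrivial ↥C := by
    rw [Set.nontrivial_coe_sort]
    exact Set.not_subsingleton_iff.mp hsub
  obtain ⟨e, he⟩ := connected_nontrivial_edge hex.choose_spec.2.1.1 hnt
  exact ⟨_, Set.mem_image_of_mem _ he⟩

lemma minMST_le [Fintype V] {G : SimpleGraph V} {w : Sym2 V → ℝ} {C : Set V}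
    (hsub : ¬C.Subsingleton)
    (hex : ∃ TC : SimpleGraph C, IsMaxSpanTree (G.induce C) TC (subWeight w C))
    {e : Sym2 ↥C} (hmem : e ∈ hex.choose.edgeSet) :
    minMST G w C ≤ subWeight w C e := by
  rw [minMST_eq hsub hex]
  exact sInf_le_fin (finite_im _ _) (Set.mem_image_of_mem _ hmem)

lemma minMST_mem [Fintype V] {G : SimpleGraph V} {w : Sym2 V → ℝ} {C : Set V}
    (hsub : ¬C.Subsingleton)
    (hex : ∃ TC : SimpleGraph C, IsMaxSpanTree (G.induce C) TC (subWeight w C)) :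
    minMST G w C ∈ subWeight w C '' hex.choose.edgeSet := by
  rw [minMST_eq hsub hex]
  exact sInf_mem_fin (finite_im _ _) (minMST_im_nonempty hsub hex)

lemma subWeight_mem_G [Fintype V] {G : SimpleGraph V} {w : Sym2 V → ℝ} {C : Set V}
    {TC : SimpleGraph C} (hTC : IsMaxSpanTree (G.induce C) TC (subWeight w C))
    {e : Sym2 ↥C} (hmem : e ∈ TC.edgeSet) :
    e.map Subtype.val ∈ G.edgeSet ∧ ∀ x ∈ e.map Subtype.val, x ∈ C :=
  induce_edge_mem (edgeSet_mono hTC.1 hmem)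

lemma minMST_pos [Fintype V] {G : SimpleGraph V} {w : Sym2 V → ℝ} (hw : weightsOK G w)
    (C : Set V) : 0 < minMST G w C := by
  rw [minMST]
  split_ifs with h1 h2
  · exact one_pos
  · obtain ⟨x, hx, hxval⟩ := minMST_mem h1 h2
    rw [← minMST_eq h1 h2, ← hxval]
    exact (hw _ (subWeight_mem_G h2.choose_spec hx).1).1
  · exact one_pos

lemma minMST_le_one [Fintype V] {G : SimpleGraph V} {w : Sym2 V → ℝ} (hw : weightsOK G w)
    (C : Set V) : minMST G w C ≤ 1 := by
  rw [minMST]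
  split_ifs with h1 h2
  · exact le_rfl
  · obtain ⟨x, hx, hxval⟩ := minMST_mem h1 h2
    rw [← minMST_eq h1 h2, ← hxval]
    exact ((hw _ (subWeight_mem_G h2.choose_spec hx).1).2).le
  · exact le_rfl

/-- Every edge of `T` inside a `G`-connected set `C` weighs at least `minMST G w C`. -/
lemma minMST_le_tree_edge [Fintype V] {G T : SimpleGraph V} {w : Sym2 V → ℝ}
    (hT : IsMaxSpanTree G T w) (hw : weightsOK G w) {C : Set V}
    (hGC : (G.induce C).Connected) {p q : V} (hpq : s(p,q) ∈ T.edgeSet)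
    (hp : p ∈ C) (hq : q ∈ C) : minMST G w C ≤ w s(p,q) := by
  have hadj : T.Adj p q := T.mem_edgeSet.mp hpq
  have hsub : ¬C.Subsingleton := fun h => hadj.ne (h hp hq)
  have hex := exists_maxSpanTree_induce hGC w
  set TC := hex.choose with hTCdef
  have hTC := hex.choose_spec
  set A := {z | (T.deleteEdges {s(p,q)}).Reachable p z} with hA
  have hreach : TC.Reachable ⟨p, hp⟩ ⟨q, hq⟩ := hTC.2.1.1.preconnected _ _
  refine hreach.elim fun pw => ?_
  obtain ⟨c, d, hadj', hcA, hdA, -, -, -⟩ := boundary pw {u : ↥C | ↑u ∈ A}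
    (by exact Reachable.refl p) (by exact acyclic_bridge hT.2.1.2 hadj)
  have hadjmem : s(c,d) ∈ TC.edgeSet := TC.mem_edgeSet.mpr hadj'
  have hGcd : G.Adj ↑c ↑d := by
    have := edgeSet_mono hTC.1 hadjmem
    rw [SimpleGraph.mem_edgeSet, comap_adj] at this
    exact this
  have hnr : ¬ (T.deleteEdges {s(p,q)}).Reachable ↑c ↑d :=
    fun h => hdA ((show (T.deleteEdges {s(p,q)}).Reachable p ↑c from hcA).trans h)
  have hcut := cut_property hT hpq (G.mem_edgeSet.mpr hGcd) hnr
  calc minMST G w C ≤ subWeight w C s(c,d) := minMST_le hsub hex hadjmem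
    _ = w s(↑c,↑d) := by rw [subWeight, Sym2.map_pair_eq]
    _ ≤ w s(p,q) := hcut

/-! ### minIn facts -/

lemma exists_inEdge {T : SimpleGraph V} {C : Set V} (hconn : (T.induce C).Connected)
    (hsub : ¬C.Subsingleton) : (inEdges T C).Nonempty := by
  have hnt : Nontrivial ↥C := by
    rw [Set.nontrivial_coe_sort]
    exact Set.not_subsingleton_iff.mp hsub
  obtain ⟨e, he⟩ := connected_nontrivial_edge hconn hnt
  obtain ⟨h1, h2⟩ := induce_edge_mem he
  exact ⟨e.map Subtype.val, h1, h2⟩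

lemma minIn_le [Fintype V] {T : SimpleGraph V} {w : Sym2 V → ℝ} {C : Set V}
    (hsub : ¬C.Subsingleton) {f : Sym2 V} (hf : f ∈ inEdges T C) :
    minIn T w C ≤ w f := by
  rw [minIn, if_neg hsub]
  exact sInf_le_fin (finite_im _ _) (Set.mem_image_of_mem _ hf)

lemma minIn_mem [Fintype V] {T : SimpleGraph V} {w : Sym2 V → ℝ} {C : Set V}
    (hconn : (T.induce C).Connected) (hsub : ¬C.Subsingleton) :
    minIn T w C ∈ w '' inEdges T C := by
  rw [minIn, if_neg hsub]
  exact sInf_mem_fin (finite_im _ _) ((exists_inEdge hconn hsub).image w)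

lemma minIn_pos [Fintype V] {G T : SimpleGraph V} {w : Sym2 V → ℝ} (hle : T ≤ G)
    (hw : weightsOK G w) {C : Set V} (hconn : (T.induce C).Connected) :
    0 < minIn T w C := by
  by_cases hsub : C.Subsingleton
  · rw [minIn, if_pos hsub]; exact one_pos
  · obtain ⟨f, hf, hval⟩ := minIn_mem (w := w) hconn hsub
    rw [← hval]
    exact (hw f (edgeSet_mono hle hf.1)).1

/-! ### The key equality : minMST in `G` equals minIn in `T` for `T`-connected sets -/

lemma minMST_eq_minIn [Fintype V] {G T : SimpleGraph V} {w : Sym2 V → ℝ}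
    (hT : IsMaxSpanTree G T w) (hw : weightsOK G w) {C : Set V}
    (hTconn : (T.induce C).Connected) : minMST G w C = minIn T w C := by
  by_cases hsub : C.Subsingleton
  · rw [minMST, if_pos hsub, minIn, if_pos hsub]
  have hGC : (G.induce C).Connected := hTconn.mono (induce_le_induce hT.1 C)
  have hex := exists_maxSpanTree_induce hGC w
  have hTC := hex.choose_spec
  apply le_antisymm
  · obtain ⟨f, hf, hval⟩ := minIn_mem (w := w) hTconn hsub
    rw [← hval]
    induction f using Sym2.ind with
    | _ p q =>
      exact minMST_le_tree_edge hT hw hGC hf.1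
        (hf.2 p (Sym2.mem_mk_left p q)) (hf.2 q (Sym2.mem_mk_right p q))
  · obtain ⟨e, hmem, hval⟩ := minMST_mem hsub hex
    rw [← hval]
    clear hval
    induction e using Sym2.ind with
    | _ c d =>
      have hadj : hex.choose.Adj c d := hex.choose.mem_edgeSet.mp hmem
      set A := {z : ↥C | (hex.choose.deleteEdges {s(c,d)}).Reachable c z} with hA
      have hbr : (⟨d, d.2⟩ : ↥C) ∉ A := by
        exact acyclic_bridge hTC.2.1.2 hadj
      have hreach : (T.induce C).Reachable c d := hTconn.preconnected c d
      refine hreach.elim fun pw => ?_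
      obtain ⟨p, q, hadj', hpA, hqA, -, -, -⟩ := boundary pw A (by exact Reachable.refl c)
        (by simpa using hbr)
      have hinT : s((p : V), (q : V)) ∈ inEdges T C := by
        constructor
        · rw [SimpleGraph.mem_edgeSet]
          have : T.Adj ↑p ↑q := by
            have := hadj'
            rwa [comap_adj] at this
          exact this
        · intro x hx
          rw [Sym2.mem_iff] at hx
          rcases hx with rfl | rfl
          · exact p.2
          · exact q.2
      have hle : minIn T w C ≤ subWeight w C s(p,q) := by
        have := minIn_le (w := w) hsub hinT
        rwa [show w s((p:V),(q:V)) = subWeight w C s(p,q) by rw [subWeight, Sym2.map_pair_eq]]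
          at this
      refine hle.trans ?_
      by_cases heq2 : s(p,q) = s(c,d)
      · rw [heq2]
      have hnotin : s(p,q) ∉ hex.choose.edgeSet := by
        intro hmem2
        apply hqA
        have : (hex.choose.deleteEdges {s(c,d)}).Adj p q := by
          rw [deleteEdges_adj]
          exact ⟨hex.choose.mem_edgeSet.mp hmem2, by simpa using heq2⟩
        exact (hpA : _).trans this.reachable
      obtain ⟨htree, hES⟩ := swap_tree hTC.2.1 hmem (hpA : _) hqA
      have hle2 : SimpleGraph.fromEdgeSet ((hex.choose.edgeSet \ {s(c,d)}) ∪ {s(p,q)})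
          ≤ G.induce C := by
        intro u v huv
        rw [← SimpleGraph.mem_edgeSet, hES] at huv
        rcases huv with ⟨hmem2, -⟩ | hmem2
        · exact hTC.1 (hex.choose.mem_edgeSet.mp hmem2)
        · rw [Set.mem_singleton_iff] at hmem2
          rw [← SimpleGraph.mem_edgeSet, hmem2]
          exact edgeSet_mono (induce_le_induce hT.1 C) hadj'
      have hmax := hTC.2.2 _ hle2 htree
      have htw := totalWeight_swap (subWeight w C) (Ne.symm heq2) hES hmem hnotin
      rw [htw] at hmax
      linarith

/-- Per-cluster equality of quality measures for `T`-connected clusters. -/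
lemma phi_eq_phiT [Fintype V] {G T : SimpleGraph V} {w : Sym2 V → ℝ}
    (hT : IsMaxSpanTree G T w) (hw : weightsOK G w) {C : Set V}
    (hTconn : (T.induce C).Connected) : phi G w C = phiT T w C := by
  rw [phi, phiT, maxOut_eq hT hw, minMST_eq_minIn hT hw hTconn]

/-! ### Clustering-level lemmas -/

lemma phi_nonneg [Fintype V] {G : SimpleGraph V} {w : Sym2 V → ℝ} (hw : weightsOK G w)
    (C : Set V) : 0 ≤ phi G w C :=
  div_nonneg (maxOut_nonneg hw C) (minMST_pos hw C).le

lemma eval_nonneg [Fintype V] {G : SimpleGraph V} {w : Sym2 V → ℝ} (hw : weightsOK G w)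
    (𝒞 : Set (Set V)) : 0 ≤ eval G w 𝒞 := by
  apply sSup_nonneg_fin
  rintro x ⟨C, -, rfl⟩
  exact phi_nonneg hw C

lemma phi_le_eval [Fintype V] {G : SimpleGraph V} {w : Sym2 V → ℝ} {𝒞 : Set (Set V)}
    {C : Set V} (hC : C ∈ 𝒞) : phi G w C ≤ eval G w 𝒞 :=
  le_sSup_fin (finite_im _ _) (Set.mem_image_of_mem _ hC)

lemma clustering_mono {G T : SimpleGraph V} (hle : T ≤ G) {𝒞 : Set (Set V)} {k : ℕ}
    (h : IsClustering T 𝒞 k) : IsClustering G 𝒞 k := by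
  obtain ⟨⟨h1, h2, h3⟩, h4⟩ := h
  exact ⟨⟨fun C hC => ⟨(h1 C hC).1, (h1 C hC).2.1,
    ((h1 C hC).2.2).mono (induce_le_induce hle C)⟩, h2, h3⟩, h4⟩

lemma eval_eq_evalT [Fintype V] {G T : SimpleGraph V} {w : Sym2 V → ℝ}
    (hT : IsMaxSpanTree G T w) (hw : weightsOK G w) {𝒞 : Set (Set V)}
    (h : ∀ C ∈ 𝒞, (T.induce C).Connected) : eval G w 𝒞 = evalT T w 𝒞 := by
  rw [eval, evalT]
  congr 1
  apply Set.image_congr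
  intro C hC
  exact phi_eq_phiT hT hw (h C hC)

/-! ### Choosing the lightest subset -/

lemma exists_lightest {β : Type*} (wt : β → ℝ) (R : Set β) (hfin : R.Finite) :
    ∀ m, m ≤ R.ncard →
      ∃ S ⊆ R, S.ncard = m ∧ ∀ e ∈ S, ∀ f ∈ R \ S, wt e ≤ wt f := by
  intro m
  induction m with
  | zero => exact fun _ => ⟨∅, Set.empty_subset _, Set.ncard_empty _, by simp⟩
  | succ m ih =>
    intro hm
    obtain ⟨S, hSR, hScard, hSlight⟩ := ih (by omega)
    have hSfin : S.Finite := hfin.subset hSR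
    have hne : (R \ S).Nonempty := by
      by_contra hempty
      rw [Set.not_nonempty_iff_eq_empty, Set.diff_eq_empty] at hempty
      have := Set.ncard_le_ncard hempty hSfin
      omega
    obtain ⟨f₀, hf₀, hf₀min⟩ := Set.exists_min_image (R \ S) wt hfin.diff hne
    refine ⟨insert f₀ S, Set.insert_subset hf₀.1 hSR, ?_, ?_⟩
    · rw [Set.ncard_insert_of_notMem hf₀.2 hSfin, hScard]
    · intro e he f hf
      have hfRS : f ∈ R \ S := ⟨hf.1, fun hfS => hf.2 (Set.mem_insert_of_mem _ hfS)⟩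
      rcases Set.mem_insert_iff.mp he with rfl | heS
      · exact hf₀min f hfRS
      · exact hSlight e heS f hfRS

/-- Main construction : from any `k`-clustering of `G`, build a `k`-clustering of `T`
whose tree evaluation is at most the `G`-evaluation. -/
lemma exists_good_T_clustering [Fintype V] {G T : SimpleGraph V} {w : Sym2 V → ℝ}
    (hconn : G.Connected) (hw : weightsOK G w) (hT : IsMaxSpanTree G T w)
    {𝒞 : Set (Set V)} {k : ℕ} (hC : IsClustering G 𝒞 k) :
    ∃ 𝒟, IsClustering T 𝒟 k ∧ evalT T w 𝒟 ≤ eval G w 𝒞 := by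
  classical
  obtain ⟨⟨hparts, hdisj, hunion⟩, hk⟩ := hC
  have hTtree : T.IsTree := hT.2.1
  set v := eval G w 𝒞 with hv
  have hv0 : 0 ≤ v := eval_nonneg hw 𝒞
  have hphiC : ∀ C ∈ 𝒞, maxOut G w C ≤ v * minMST G w C := by
    intro C hCmem
    have h1 : phi G w C ≤ v := phi_le_eval hCmem
    rw [phi, div_le_iff₀ (minMST_pos hw C)] at h1
    linarith [h1]
  have hcov : ∀ x : V, ∃ C ∈ 𝒞, x ∈ C := by
    intro x
    have : x ∈ ⋃₀ 𝒞 := by rw [hunion]; exact Set.mem_univ x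
    exact Set.mem_sUnion.mp this
  have hunique : ∀ {C C' : Set V}, C ∈ 𝒞 → C' ∈ 𝒞 → ∀ {x : V}, x ∈ C → x ∈ C' → C = C' := by
    intro C C' hC1 hC2 x hx1 hx2
    by_contra hne
    exact (Set.disjoint_left.mp (hdisj C hC1 C' hC2 hne)) hx1 hx2
  set R : Set (Sym2 V) := {e | e ∈ T.edgeSet ∧ ¬ ∃ C ∈ 𝒞, ∀ x ∈ e, x ∈ C} with hRdef
  have hRsub : R ⊆ T.edgeSet := fun e he => he.1
  -- walks avoiding `R` stay inside clusters
  have hstay : ∀ (S' : Set (Sym2 V)), R ⊆ S' → ∀ C ∈ 𝒞, ∀ {x y : V},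
      (T.deleteEdges S').Reachable x y → x ∈ C → y ∈ C := by
    intro S' hS' C hCmem x y hxy
    obtain ⟨p⟩ := hxy
    induction p with
    | nil => exact id
    | @cons x' z' y' hadj q ih =>
      intro hx
      apply ih
      rw [deleteEdges_adj] at hadj
      have hex : ∃ C₀ ∈ 𝒞, ∀ u ∈ s(x', z'), u ∈ C₀ := by
        by_contra hcon
        exact hadj.2 (hS' ⟨T.mem_edgeSet.mpr hadj.1, hcon⟩)
      obtain ⟨C₀, hC₀, hball⟩ := hex
      have hCeq : C = C₀ := hunique hCmem hC₀ hx (hball x' (Sym2.mem_mk_left x' z'))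
      rw [hCeq]
      exact hball z' (Sym2.mem_mk_right x' z')
  -- `k ≥ 1`
  have hVne : Nonempty V := hconn.nonempty
  have h𝒞ne : 𝒞.Nonempty := by
    obtain ⟨C, hCmem, -⟩ := hcov (Classical.arbitrary V)
    exact ⟨C, hCmem⟩
  have hk1 : 1 ≤ k := by
    rw [← hk]
    exact (Set.ncard_pos (Set.toFinite _)).mpr h𝒞ne
  -- counting : `k ≤ R.ncard + 1`
  have hcompR := components_deleteEdges_ncard hTtree hRsub
  have hinj : k ≤ R.ncard + 1 := by
    set f : Set V → Set V := fun C =>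
      if h : (C ∩ Set.univ).Nonempty ∧ C ∈ 𝒞 then
        {y | (T.deleteEdges R).Reachable h.1.choose y} else ∅ with hfdef
    have hfC : ∀ C ∈ 𝒞, f C ⊆ C ∧ f C ∈ components (T.deleteEdges R) ∧
        (C ∩ Set.univ).Nonempty := by
      intro C hCmem
      have hCne : (C ∩ Set.univ).Nonempty := by
        obtain ⟨x, hx⟩ := (hparts C hCmem).1
        exact ⟨x, hx, Set.mem_univ x⟩
      have hcond : (C ∩ Set.univ).Nonempty ∧ C ∈ 𝒞 := ⟨hCne, hCmem⟩
      have hxC : hcond.1.choose ∈ C := hcond.1.choose_spec.1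
      refine ⟨?_, ?_, hCne⟩
      · rw [hfdef]
        simp only [dif_pos hcond]
        intro z hz
        exact hstay R (subset_refl R) C hCmem hz hxC
      · rw [hfdef]
        simp only [dif_pos hcond]
        exact cl_mem_components _
    have hinjOn : Set.InjOn f 𝒞 := by
      intro C hC1 C' hC2 heq
      have h1 := hfC C hC1
      have h2 := hfC C' hC2
      have hcond : (C ∩ Set.univ).Nonempty ∧ C ∈ 𝒞 := ⟨h1.2.2, hC1⟩
      have hx : hcond.1.choose ∈ f C := by
        rw [hfdef]
        simp only [dif_pos hcond]
        exact Reachable.refl _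
      have hxC : hcond.1.choose ∈ C := hcond.1.choose_spec.1
      have hxC' : hcond.1.choose ∈ C' := h2.1 (heq ▸ hx)
      exact hunique hC1 hC2 hxC hxC'
    have h1 : (f '' 𝒞).ncard = k := by
      rw [Set.ncard_image_of_injOn hinjOn, hk]
    have h2 : f '' 𝒞 ⊆ components (T.deleteEdges R) := by
      rintro D ⟨C, hCmem, rfl⟩
      exact (hfC C hCmem).2.1
    have h3 := Set.ncard_le_ncard h2 (Set.toFinite _)
    omega
  -- choose the `k-1` lightest edges of `R`
  obtain ⟨S, hSR, hScard, hSlight⟩ := exists_lightest w R (Set.toFinite _) (k - 1) (by omega)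
  have hSsub : S ⊆ T.edgeSet := hSR.trans hRsub
  set TS := T.deleteEdges S with hTS
  set 𝒟 := components TS with h𝒟
  have h𝒟card : 𝒟.ncard = k := by
    rw [h𝒟, hTS, components_deleteEdges_ncard hTtree hSsub, hScard]
    omega
  have h𝒟part := components_partition (H := TS)
  have h𝒟clust : IsClustering T 𝒟 k := by
    refine ⟨⟨fun D hD => ⟨(h𝒟part.1 D hD).1, (h𝒟part.1 D hD).2.1,
      ((h𝒟part.1 D hD).2.2).mono (induce_le_induce (deleteEdges_le _) D)⟩,
      h𝒟part.2.1, h𝒟part.2.2⟩, h𝒟card⟩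
  refine ⟨𝒟, h𝒟clust, ?_⟩
  apply Real.sSup_le _ hv0
  rintro r ⟨D, hD, rfl⟩
  -- show `phiT T w D ≤ v`
  have hDconnT : (T.induce D).Connected :=
    ((h𝒟part.1 D hD).2.2).mono (induce_le_induce (deleteEdges_le _) D)
  obtain ⟨x₀, rfl⟩ := hD
  set D := {y | TS.Reachable x₀ y} with hDdef
  have hminpos := minIn_pos hT.1 hw hDconnT
  rw [phiT, div_le_iff₀ hminpos]
  -- `maxOut T w D ≤ minIn T w D * v`
  apply Real.sSup_le _ (mul_nonneg hv0 hminpos.le)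
  rintro r ⟨e, heOut, rfl⟩
  obtain ⟨heT, x, y, rfl, hxD, hyD⟩ := heOut
  -- the out-edge is in `S`
  have heS : s(x,y) ∈ S := by
    by_contra hnotS
    apply hyD
    have : TS.Adj x y := by
      rw [hTS, deleteEdges_adj]
      exact ⟨T.mem_edgeSet.mp heT, hnotS⟩
    exact (hxD : TS.Reachable x₀ x).trans this.reachable
  have heR : s(x,y) ∈ R := hSR heS
  obtain ⟨Cx, hCx, hxCx⟩ := hcov x
  have hyCx : y ∉ Cx := by
    intro hy
    apply heR.2
    refine ⟨Cx, hCx, fun u hu => ?_⟩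
    rcases Sym2.mem_iff.mp hu with rfl | rfl
    · exact hxCx
    · exact hy
  have heOutG : s(x,y) ∈ outEdges G Cx := mem_outEdges (edgeSet_mono hT.1 heT) hxCx hyCx
  -- key bound : for every cluster meeting `D`
  have hgamma : ∀ C' ∈ 𝒞, (D ∩ C').Nonempty → w s(x,y) ≤ v * minMST G w C' := by
    rintro C' hC' ⟨u, huD, huC'⟩
    by_cases hDC : D ⊆ C'
    · have hCeq : Cx = C' := hunique hCx hC' hxCx (hDC hxD)
      calc w s(x,y) ≤ maxOut G w Cx := le_maxOut heOutG
        _ ≤ v * minMST G w Cx := hphiC Cx hCx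
        _ = v * minMST G w C' := by rw [hCeq]
    · obtain ⟨z, hzD, hzC'⟩ := Set.not_subset.mp hDC
      have hreach : TS.Reachable u z := (huD : TS.Reachable x₀ u).symm.trans hzD
      refine hreach.elim fun pw => ?_
      obtain ⟨p', q', hadj', hpC', hqC', -, -, -⟩ := boundary pw C' huC' hzC'
      rw [hTS, deleteEdges_adj] at hadj'
      have hgR : s(p', q') ∈ R := by
        refine ⟨T.mem_edgeSet.mpr hadj'.1, ?_⟩
        rintro ⟨C₀, hC₀, hball⟩
        have : C₀ = C' := hunique hC₀ hC' (hball p' (Sym2.mem_mk_left p' q')) hpC'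
        exact hqC' (this ▸ hball q' (Sym2.mem_mk_right p' q'))
      calc w s(x,y) ≤ w s(p',q') := hSlight _ heS _ ⟨hgR, hadj'.2⟩
        _ ≤ maxOut G w C' := le_maxOut
            (mem_outEdges (edgeSet_mono hT.1 hgR.1) hpC' hqC')
        _ ≤ v * minMST G w C' := hphiC C' hC'
  rw [mul_comm]
  by_cases hDsub : D.Subsingleton
  · rw [minIn, if_pos hDsub, one_mul]
    calc w s(x,y) ≤ v * minMST G w Cx := hgamma Cx hCx ⟨x, hxD, hxCx⟩
      _ ≤ v * 1 := mul_le_mul_of_nonneg_left (minMST_le_one hw Cx) hv0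
      _ = v := mul_one v
  · obtain ⟨f₀, hf₀In, hf₀val⟩ := minIn_mem (w := w) hDconnT hDsub
    rw [← hf₀val]
    induction f₀ using Sym2.ind with
    | _ p q =>
      obtain ⟨hpqT, hf₀mem⟩ := hf₀In
      have hpD : p ∈ D := hf₀mem p (Sym2.mem_mk_left p q)
      have hqD : q ∈ D := hf₀mem q (Sym2.mem_mk_right p q)
      have hadjpq : T.Adj p q := T.mem_edgeSet.mp hpqT
      have hwpq_pos : 0 < w s(p,q) := (hw _ (edgeSet_mono hT.1 hpqT)).1
      by_cases hcross : ∃ C₀ ∈ 𝒞, ∀ u ∈ s(p,q), u ∈ C₀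
      · obtain ⟨C₀, hC₀, hball⟩ := hcross
        have hGC₀ : (G.induce C₀).Connected := (hparts C₀ hC₀).2.2
        have h1 : minMST G w C₀ ≤ w s(p,q) := minMST_le_tree_edge hT hw hGC₀ hpqT
          (hball p (Sym2.mem_mk_left p q)) (hball q (Sym2.mem_mk_right p q))
        calc w s(x,y) ≤ v * minMST G w C₀ :=
              hgamma C₀ hC₀ ⟨p, hpD, hball p (Sym2.mem_mk_left p q)⟩
          _ ≤ v * w s(p,q) := mul_le_mul_of_nonneg_left h1 hv0
          _ = w s(p,q) * v := by ring
      · have hf₀R : s(p,q) ∈ R := ⟨hpqT, hcross⟩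
        have hf₀S : s(p,q) ∉ S := by
          intro hmem
          have hreach : TS.Reachable p q := (hpD : TS.Reachable x₀ p).symm.trans hqD
          have hle : TS ≤ T.deleteEdges {s(p,q)} := by
            intro a b hab
            rw [hTS, deleteEdges_adj] at hab
            rw [deleteEdges_adj]
            refine ⟨hab.1, ?_⟩
            rw [Set.mem_singleton_iff]
            intro habeq
            exact hab.2 (habeq ▸ hmem)
          exact acyclic_bridge hTtree.2 hadjpq (hreach.mono hle)
        have hlight : w s(x,y) ≤ w s(p,q) := hSlight _ heS _ ⟨hf₀R, hf₀S⟩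
        by_cases hv1 : 1 ≤ v
        · calc w s(x,y) ≤ w s(p,q) := hlight
            _ = w s(p,q) * 1 := (mul_one _).symm
            _ ≤ w s(p,q) * v := mul_le_mul_of_nonneg_left hv1 hwpq_pos.le
        · exfalso
          push_neg at hv1
          -- when `v < 1` every cluster is `T \ R`-connected
          have claim2 : ∀ C ∈ 𝒞, ∀ a ∈ C, ∀ b ∈ C, (T.deleteEdges R).Reachable a b := by
            intro C hCmem a haC b hbC
            by_cases hab : a = b
            · subst hab; exact Reachable.refl a
            set TCg := T.deleteEdges {e | ¬ ∀ u ∈ e, u ∈ C} with hTCg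
            have hTCgle : TCg ≤ T.deleteEdges R := by
              intro a' b' hadj
              rw [hTCg, deleteEdges_adj] at hadj
              rw [deleteEdges_adj]
              refine ⟨hadj.1, ?_⟩
              rintro ⟨-, hcon⟩
              have hin : ∀ u ∈ s(a', b'), u ∈ C := by
                have h2 := hadj.2
                rw [Set.mem_setOf_eq, not_not] at h2
                exact h2
              exact hcon ⟨C, hCmem, hin⟩
            suffices h : TCg.Reachable a b by exact h.mono hTCgle
            by_contra hnr'
            have hstay2 : ∀ {x' y' : V}, TCg.Reachable x' y' → x' ∈ C → y' ∈ C := by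
              intro x' y' hxy
              obtain ⟨p2⟩ := hxy
              induction p2 with
              | nil => exact id
              | @cons x2 z2 y2 hadj q2 ih =>
                intro hx2
                apply ih
                rw [hTCg, deleteEdges_adj] at hadj
                have hin : ∀ u ∈ s(x2, z2), u ∈ C := by
                  have h2 := hadj.2
                  rw [Set.mem_setOf_eq, not_not] at h2
                  exact h2
                exact hin z2 (Sym2.mem_mk_right x2 z2)
            set K := {z | TCg.Reachable a z} with hK
            have hbK : b ∉ K := hnr'
            have hCsub : ¬C.Subsingleton := fun h => hab (h haC hbC)
            have hGC : (G.induce C).Connected := (hparts C hCmem).2.2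
            have hex := exists_maxSpanTree_induce hGC w
            have hTCspec := hex.choose_spec
            have hreach : hex.choose.Reachable ⟨a, haC⟩ ⟨b, hbC⟩ :=
              hTCspec.2.1.1.preconnected _ _
            refine hreach.elim fun pw2 => ?_
            obtain ⟨ct, dt, hadjcd, hcK, hdK, -, -, -⟩ := boundary pw2 {u : ↥C | ↑u ∈ K}
              (by exact Reachable.refl a) (by exact hbK)
            have hmemcd : s(ct,dt) ∈ hex.choose.edgeSet := hex.choose.mem_edgeSet.mpr hadjcd
            have hGcd : G.Adj ↑ct ↑dt := by
              have h2 := edgeSet_mono hTCspec.1 hmemcd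
              rwa [SimpleGraph.mem_edgeSet, comap_adj] at h2
            have hwcd : minMST G w C ≤ w s((ct:V), (dt:V)) := by
              have h2 := minMST_le hCsub hex hmemcd
              rwa [show subWeight w C s(ct,dt) = w s((ct:V),(dt:V)) by
                rw [subWeight, Sym2.map_pair_eq]] at h2
            have hOutK : s((ct:V),(dt:V)) ∈ outEdges G K :=
              mem_outEdges (G.mem_edgeSet.mpr hGcd) hcK hdK
            have hmaxK : w s((ct:V),(dt:V)) ≤ maxOut T w K := by
              rw [maxOut_eq hT hw K]
              exact le_maxOut hOutK
            have hOutTne : (w '' outEdges T K).Nonempty := by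
              by_contra hempty
              rw [Set.not_nonempty_iff_eq_empty] at hempty
              have h0 : maxOut T w K = 0 := by rw [maxOut, hempty, Real.sSup_empty]
              have hpos : 0 < w s((ct:V),(dt:V)) := (hw _ (G.mem_edgeSet.mpr hGcd)).1
              linarith
            obtain ⟨g, hgOut, hgval⟩ := sSup_mem_fin (finite_im _ _) hOutTne
            obtain ⟨hgT, p', q', rfl, hpK, hqK⟩ := hgOut
            have hpC : p' ∈ C := hstay2 hpK haC
            have hqC : q' ∉ C := by
              intro hqmem
              apply hqK
              have hadj2 : TCg.Adj p' q' := by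
                rw [hTCg, deleteEdges_adj]
                refine ⟨T.mem_edgeSet.mp hgT, ?_⟩
                rw [Set.mem_setOf_eq, not_not]
                intro u hu
                rcases Sym2.mem_iff.mp hu with rfl | rfl
                · exact hpC
                · exact hqmem
              exact (hpK : TCg.Reachable a p').trans hadj2.reachable
            have h5 : w s(p',q') ≤ maxOut G w C :=
              le_maxOut (mem_outEdges (edgeSet_mono hT.1 hgT) hpC hqC)
            have h6 := hphiC C hCmem
            have h7 : minMST G w C ≤ w s(p',q') := by
              calc minMST G w C ≤ w s((ct:V),(dt:V)) := hwcd
                _ ≤ maxOut T w K := hmaxK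
                _ = w s(p',q') := by exact hgval.symm
            have h8 := minMST_pos hw C
            nlinarith
          -- hence `components (T \ R) = 𝒞`, so `R = S`
          have hcomp_eq : components (T.deleteEdges R) = 𝒞 := by
            ext D'
            constructor
            · rintro ⟨z, rfl⟩
              obtain ⟨Cz, hCz, hzCz⟩ := hcov z
              have heq : {y | (T.deleteEdges R).Reachable z y} = Cz := by
                apply Set.Subset.antisymm
                · intro u hu
                  exact hstay R (subset_refl R) Cz hCz hu hzCz
                · intro u hu
                  exact claim2 Cz hCz z hzCz u hu
              rw [heq]
              exact hCz
            · intro hD'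
              obtain ⟨z, hz⟩ := (hparts D' hD').1
              have heq : D' = {y | (T.deleteEdges R).Reachable z y} := by
                apply Set.Subset.antisymm
                · intro u hu
                  exact claim2 D' hD' z hz u hu
                · intro u hu
                  exact hstay R (subset_refl R) D' hD' hu hz
              exact ⟨z, heq⟩
          have hRcard : R.ncard + 1 = k := by
            rw [← hcompR, hcomp_eq, hk]
          have hSeqR : S = R := Set.eq_of_subset_of_ncard_le hSR
            (by omega) (Set.toFinite _)
          exact hf₀S (hSeqR ▸ hf₀R)

/-- the optimal min-max clustering value of `G` equals that of its
maximum spanning tree. -/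
theorem statement3 {V : Type*} [Fintype V] (G : SimpleGraph V) (w : Sym2 V → ℝ)
    (hconn : G.Connected) (hw : weightsOK G w) (T : SimpleGraph V)
    (hT : IsMaxSpanTree G T w) (k : ℕ)
    (𝒞s : Set (Set V)) (hCs : IsOptimal G w k 𝒞s)
    (𝒞d : Set (Set V)) (hCd : IsClustering T 𝒞d k)
    (hCdopt : ∀ 𝒟, IsClustering T 𝒟 k → evalT T w 𝒞d ≤ evalT T w 𝒟) :
    eval G w 𝒞s = evalT T w 𝒞d := by
  have hTconn : ∀ C ∈ 𝒞d, (T.induce C).Connected := fun C hC => (hCd.1.1 C hC).2.2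
  have le1 : eval G w 𝒞s ≤ evalT T w 𝒞d := by
    have h1 := hCs.2 𝒞d (clustering_mono hT.1 hCd)
    rwa [eval_eq_evalT hT hw hTconn] at h1
  have le2 : evalT T w 𝒞d ≤ eval G w 𝒞s := by
    obtain ⟨𝒟, h𝒟, hle⟩ := exists_good_T_clustering hconn hw hT hCs.1
    exact (hCdopt 𝒟 h𝒟).trans hle
  exact le_antisymm le1 le2

end Bal
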